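/- Let X be a connected topological space and let C ⊆ X be a subset with empty interior. Suppose {V_i}_{i∈I} is an open cover of X such that V_i \ C is preconnected for every i ∈ I. Then X \ C is preconnected; moreover X \ C is nonempty whenever X is nonempty. -/

import Mathlib

/-- Let `X` be a connected topological space and `C ⊆ X` a
subset with empty interior. Suppose `{V i}` is an open cover of `X` such that
`V i \ C` is preconnected for every `i`. Then `X \ C` is preconnected;
moreover `X \ C` is nonempty whenever `X` is nonempty. -/
theorem complement_preconnected_of_cover {X : Type*} [TopologicalSpace X] [ConnectedSpace X]
    (C : Set X) (hC : interior C = ∅)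
    {I : Type*} (V : I → Set X) (hVopen : ∀ i, IsOpen (V i))
    (hVcover : (⋃ i, V i) = Set.univ)
    (hVconn : ∀ i, IsPreconnected (V i \ C)) :
    IsPreconnected Cᶜ ∧ (Nonempty X → Cᶜ.Nonempty) := by
  have key : ∀ U : Set X, IsOpen U → U.Nonempty → (U \ C).Nonempty := by
    intro U hU hne
    rw [Set.nonempty_iff_ne_empty]
    intro h
    have hsub : U ⊆ C := by rwa [Set.diff_eq_empty] at h
    have : U ⊆ interior C := hU.subset_interior_iff.mpr hsub
    rw [hC] at this
    exact hne.ne_empty (Set.subset_empty_iff.mp this)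
  refine ⟨?_, ?_⟩
  · rcases isEmpty_or_nonempty X with hX | hX
    · have : Cᶜ = (∅ : Set X) := Set.eq_empty_of_isEmpty _
      rw [this]; exact isPreconnected_empty
    · obtain ⟨x₀⟩ := hX
      obtain ⟨i₀, hi₀⟩ : ∃ i, x₀ ∈ V i := by
        have : x₀ ∈ ⋃ i, V i := hVcover ▸ Set.mem_univ x₀
        simpa using this
      set r : I → I → Prop := fun i j => ((V i ∩ V j) \ C).Nonempty with hr
      have hrsymm : ∀ {i j}, r i j → r j i := by
        rintro i j ⟨x, hx1, hx2⟩
        exact ⟨x, by rw [Set.inter_comm]; exact hx1, hx2⟩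
      set s : Set I := {i | Relation.ReflTransGen r i₀ i} with hs
      have hi₀s : i₀ ∈ s := Relation.ReflTransGen.refl
      have hclosed : ∀ {a b}, Relation.ReflTransGen r a b → a ∈ s → b ∈ s := by
        intro a b hab ha
        induction hab with
        | refl => exact ha
        | tail _ hbc ih => exact ih.tail hbc
      -- the union of V i over i ∈ s is all of X
      have hcov : (⋃ i ∈ s, V i) = Set.univ := by
        set A : Set X := ⋃ i ∈ s, V i with hA
        set B : Set X := ⋃ i ∈ sᶜ, V i with hB
        have hAopen : IsOpen A := isOpen_biUnion fun i _ => hVopen i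
        have hBopen : IsOpen B := isOpen_biUnion fun i _ => hVopen i
        have hAB : Set.univ ⊆ A ∪ B := by
          intro x _
          obtain ⟨j, hj⟩ : ∃ j, x ∈ V j := by
            have : x ∈ ⋃ i, V i := hVcover ▸ Set.mem_univ x
            simpa using this
          by_cases hjs : j ∈ s
          · exact Or.inl (Set.mem_biUnion hjs hj)
          · exact Or.inr (Set.mem_biUnion hjs hj)
        have hdisj : A ∩ B = ∅ := by
          rw [Set.eq_empty_iff_forall_notMem]
          rintro x ⟨hxA, hxB⟩
          obtain ⟨i, his, hxi⟩ := Set.mem_iUnion₂.mp hxA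
          obtain ⟨j, hjs, hxj⟩ := Set.mem_iUnion₂.mp hxB
          have : r i j := key _ ((hVopen i).inter (hVopen j)) ⟨x, hxi, hxj⟩
          exact hjs (his.tail this)
        have hBempty : B = ∅ := by
          rw [Set.eq_empty_iff_forall_notMem]
          intro x hxB
          have h1 : (Set.univ ∩ A).Nonempty := ⟨x₀, Set.mem_univ _, Set.mem_biUnion hi₀s hi₀⟩
          have h2 : (Set.univ ∩ B).Nonempty := ⟨x, Set.mem_univ _, hxB⟩
          obtain ⟨y, _, hy⟩ := isPreconnected_univ A B hAopen hBopen hAB h1 h2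
          exact (Set.eq_empty_iff_forall_notMem.mp hdisj) y hy
        apply Set.eq_univ_of_univ_subset
        intro x hx
        rcases hAB hx with h | h
        · exact h
        · exact absurd h (by rw [hBempty]; exact Set.notMem_empty x)
      -- Cᶜ as a biUnion
      have hCc : Cᶜ = ⋃ i ∈ s, (V i \ C) := by
        apply Set.eq_of_subset_of_subset
        · intro x hx
          have : x ∈ ⋃ i ∈ s, V i := hcov ▸ Set.mem_univ x
          obtain ⟨i, his, hxi⟩ := Set.mem_iUnion₂.mp this
          exact Set.mem_biUnion his ⟨hxi, hx⟩
        · intro x hx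
          obtain ⟨i, _, _, hxC⟩ := Set.mem_iUnion₂.mp hx
          exact hxC
      rw [hCc]
      apply IsPreconnected.biUnion_of_reflTransGen (fun i _ => hVconn i)
      intro i hi j hj
      -- build path from i to j through s
      have hij : Relation.ReflTransGen r i j := by
        have h1 : Relation.ReflTransGen r i i₀ :=
          (@Relation.ReflTransGen.symmetric _ r ⟨fun a b h => hrsymm h⟩).symm _ _ hi
        exact h1.trans hj
      -- lift to the restricted relation
      clear hj
      induction hij with
      | refl => exact Relation.ReflTransGen.refl
      | @tail b c hib hbc ih =>
        have hbs : b ∈ s := hclosed hib hi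
        obtain ⟨x, ⟨hxb, hxc⟩, hxC⟩ := hbc
        exact ih.tail ⟨⟨x, ⟨hxb, hxC⟩, ⟨hxc, hxC⟩⟩, hbs⟩
  · intro hX
    obtain ⟨x⟩ := hX
    have := key Set.univ isOpen_univ ⟨x, Set.mem_univ x⟩
    obtain ⟨y, _, hy⟩ := this
    exact ⟨y, hy⟩
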